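/- arXiv:math/0211085 — 2 statements merged into one kernel-verified Lean document; each statement's English description precedes it below -/
import Mathlib

section
/- Let R₀ be a polynomial ring in countably many variables over ℤ[1/2], and let η : R₀ → A₀ be a ring homomorphism where A₀ is a field of characteristic ≠ 2. Then there exists a multiplicative subset S ⊆ R₀ and a regular sequence in S⁻¹R₀ whose quotient K is a subfield of A₀ containing the image of η, such that A₀ is a free module over K. In particular A₀ is a free module over a localised regular quotient of R₀. -/
set_option linter.unusedSectionVars false
set_option maxHeartbeats 800000

def IsRegularOrdSeq {A : Type*} [CommRing A] (lam : Ordinal) (x : Ordinal → A) : Prop :=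
  ∀ α < lam, Ideal.Quotient.mk (Ideal.span (x '' {β | β < α})) (x α) ∈
    nonZeroDivisors (A ⧸ Ideal.span (x '' {β | β < α}))

namespace FFLRQ
open MvPolynomial

variable {Zh : Type} [CommRing Zh] [Algebra ℤ Zh] [IsLocalization.Away (2 : ℤ) Zh]
variable {A₀ : Type} [Field A₀]

theorem zhDomain : IsDomain Zh :=
  IsLocalization.isDomain_of_le_nonZeroDivisors (M := Submonoid.powers (2 : ℤ)) Zh
    (by
      intro x hx
      obtain ⟨n, rfl⟩ := hx
      exact mem_nonZeroDivisors_of_ne_zero (pow_ne_zero _ two_ne_zero))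

section Eta
variable (η : MvPolynomial ℕ Zh →+* A₀)

noncomputable def σh : Zh →+* A₀ := η.comp C
noncomputable def av (n : ℕ) : A₀ := η (X n)
noncomputable def F (n : ℕ) : Subfield A₀ :=
  Subfield.closure (Set.range (σh η) ∪ (av η '' Set.Iio n))
theorem Fle {m n : ℕ} (h : m ≤ n) : F η m ≤ F η n :=
  Subfield.closure_mono (Set.union_subset_union_right _
    (Set.image_mono (Set.Iio_subset_Iio h)))
theorem σ_memF (z : Zh) (n : ℕ) : σh η z ∈ F η n :=
  Subfield.subset_closure (Or.inl ⟨z, rfl⟩)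
theorem av_memF {i n : ℕ} (h : i < n) : av η i ∈ F η n :=
  Subfield.subset_closure (Or.inr ⟨i, h, rfl⟩)
abbrev W (n : ℕ) := MvPolynomial {i : ℕ // n ≤ i} (F η n)
noncomputable def σr (n : ℕ) : Zh →+* F η n :=
  (σh η).codRestrict _ (fun z => σ_memF η z n)
noncomputable def Θ (n : ℕ) : MvPolynomial ℕ Zh →+* W η n :=
  eval₂Hom (C.comp (σr η n))
    (fun i => if h : n ≤ i then X ⟨i, h⟩ else C ⟨av η i, av_memF η (not_le.1 h)⟩)
theorem Θ_C (n : ℕ) (z : Zh) : Θ η n (C z) = C (σr η n z) := by simp [Θ]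
theorem Θ_X_ge {n i : ℕ} (h : n ≤ i) : Θ η n (X i) = X ⟨i, h⟩ := by simp [Θ, h]
theorem Θ_X_lt {n i : ℕ} (h : i < n) : Θ η n (X i) = C ⟨av η i, av_memF η h⟩ := by
  simp [Θ, not_le.2 h]


/-- polynomials in the first `n` variables -/
noncomputable def Rn (n : ℕ) : Subring (MvPolynomial ℕ Zh) :=
  Subring.closure (Set.range (C : Zh →+* MvPolynomial ℕ Zh) ∪
    ((fun i => (X i : MvPolynomial ℕ Zh)) '' Set.Iio n))

theorem Θ_const {n : ℕ} {u : MvPolynomial ℕ Zh} (hu : u ∈ Rn (Zh := Zh) n) :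
    ∃ w : F η n, (w : A₀) = η u ∧ Θ η n u = C w := by
  induction hu using Subring.closure_induction with
  | mem x hx =>
    rcases hx with ⟨z, rfl⟩ | ⟨i, hi, rfl⟩
    · exact ⟨σr η n z, rfl, Θ_C η n z⟩
    · exact ⟨⟨av η i, av_memF η hi⟩, rfl, Θ_X_lt η hi⟩
  | zero => exact ⟨0, by simp, by simp⟩
  | one => exact ⟨1, by simp, by simp⟩
  | add x y hx hy ihx ihy =>
    obtain ⟨w1, hw1, hθ1⟩ := ihx
    obtain ⟨w2, hw2, hθ2⟩ := ihy
    exact ⟨w1 + w2, by push_cast [hw1, hw2]; simp, by simp [hθ1, hθ2]⟩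
  | neg x hx ihx =>
    obtain ⟨w1, hw1, hθ1⟩ := ihx
    exact ⟨-w1, by push_cast [hw1]; simp, by simp [hθ1]⟩
  | mul x y hx hy ihx ihy =>
    obtain ⟨w1, hw1, hθ1⟩ := ihx
    obtain ⟨w2, hw2, hθ2⟩ := ihy
    exact ⟨w1 * w2, by push_cast [hw1, hw2]; simp, by simp [hθ1, hθ2]⟩

theorem η_memF {n : ℕ} {u : MvPolynomial ℕ Zh} (hu : u ∈ Rn (Zh := Zh) n) :
    η u ∈ F η n := by
  obtain ⟨w, hw, -⟩ := Θ_const η hu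
  exact hw ▸ w.2

-- NEW PART

/-- evaluation back to the field -/
noncomputable def evW (n : ℕ) : W η n →+* A₀ :=
  eval₂Hom (F η n).subtype (fun i => av η i.1)

theorem evW_Θ (n : ℕ) : (evW η n).comp (Θ η n) = η := by
  apply ringHom_ext
  · intro z
    simp [Θ_C, evW, σr, σh]
  · intro i
    by_cases h : n ≤ i
    · simp [Θ_X_ge η h, evW, av]
    · simp [Θ_X_lt η (not_le.1 h), evW, av]

theorem kerΘ_le (n : ℕ) : RingHom.ker (Θ η n) ≤ RingHom.ker η := by
  intro f hf
  rw [RingHom.mem_ker] at hf ⊢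
  rw [← evW_Θ η n]
  simp [hf]

def eOpt (n : ℕ) : {i : ℕ // n ≤ i} ≃ Option {i : ℕ // n + 1 ≤ i} where
  toFun x := if h : x.1 = n then none else
    some ⟨x.1, Nat.lt_of_le_of_ne x.2 (Ne.symm h)⟩
  invFun o := o.elim ⟨n, le_rfl⟩ fun j => ⟨j.1, Nat.le_of_succ_le j.2⟩
  left_inv := by
    rintro ⟨i, hi⟩
    by_cases h : i = n <;> simp [h]
  right_inv := by
    rintro (_ | ⟨j, hj⟩)
    · simp
    · have : j ≠ n := by omega
      simp [this]

noncomputable def Ψe (n : ℕ) :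
    W η n ≃ₐ[F η n] MvPolynomial {i : ℕ // n + 1 ≤ i} (Polynomial (F η n)) :=
  (renameEquiv _ (eOpt n)).trans (optionEquivRight _ _)

noncomputable def δh (n : ℕ) : Polynomial (F η n) →+* F η (n + 1) :=
  Polynomial.eval₂RingHom (Subfield.inclusion (Fle η (Nat.le_succ n)))
    ⟨av η n, av_memF η (Nat.lt_succ_self n)⟩

noncomputable def μh (n : ℕ) : W η n →+* W η (n + 1) :=
  (MvPolynomial.map (δh η n)).comp (Ψe η n).toRingEquiv.toRingHom

theorem μh_C (n : ℕ) (y : F η n) :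
    μh η n (C y) = C (Subfield.inclusion (Fle η (Nat.le_succ n)) y) := by
  simp [μh, Ψe, optionEquivRight_C, δh]

theorem μh_X_eq (n : ℕ) :
    μh η n (X ⟨n, le_rfl⟩) = C ⟨av η n, av_memF η (Nat.lt_succ_self n)⟩ := by
  have h1 : eOpt n ⟨n, le_rfl⟩ = none := by simp [eOpt]
  simp [μh, Ψe, h1, optionEquivRight_X_none, δh]

theorem μh_X_gt (n i : ℕ) (h : n + 1 ≤ i) :
    μh η n (X ⟨i, Nat.le_of_succ_le h⟩) = X ⟨i, h⟩ := by
  have h1 : eOpt n ⟨i, Nat.le_of_succ_le h⟩ = some ⟨i, h⟩ := by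
    have : i ≠ n := by omega
    simp [eOpt, this]
  simp [μh, Ψe, h1, optionEquivRight_X_some]

theorem Θ_succ (n : ℕ) : Θ η (n + 1) = (μh η n).comp (Θ η n) := by
  apply ringHom_ext
  · intro z
    rw [RingHom.comp_apply, Θ_C, Θ_C, μh_C]
    rfl
  · intro i
    rw [RingHom.comp_apply]
    by_cases h : n ≤ i
    · by_cases h2 : i = n
      · subst h2
        rw [Θ_X_ge η h, Θ_X_lt η (Nat.lt_succ_self i)]
        exact (μh_X_eq η i).symm
      · have h3 : n + 1 ≤ i := Nat.lt_of_le_of_ne h (Ne.symm h2)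
        rw [Θ_X_ge η h, Θ_X_ge η h3]
        have : (⟨i, h⟩ : {j : ℕ // n ≤ j}) = ⟨i, Nat.le_of_succ_le h3⟩ := rfl
        rw [this, μh_X_gt]
    · have h4 : i < n := not_le.1 h
      rw [Θ_X_lt η h4, Θ_X_lt η (h4.trans (Nat.lt_succ_self n)), μh_C]
      rfl


-- chunk 3: the principal generator of ker δh, Qhat, ker μh

noncomputable def qg (n : ℕ) : Polynomial (F η n) :=
  haveI : (RingHom.ker (δh η n)).IsPrincipal := IsPrincipalIdealRing.principal _
  Submodule.IsPrincipal.generator (RingHom.ker (δh η n) : Ideal (Polynomial (F η n)))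

theorem ker_δh (n : ℕ) : RingHom.ker (δh η n) = Ideal.span {qg η n} := by
  haveI : (RingHom.ker (δh η n)).IsPrincipal := IsPrincipalIdealRing.principal _
  exact (Ideal.span_singleton_generator _).symm

theorem δh_qg (n : ℕ) : δh η n (qg η n) = 0 := by
  have : qg η n ∈ RingHom.ker (δh η n) := by
    haveI : (RingHom.ker (δh η n)).IsPrincipal := IsPrincipalIdealRing.principal _
    exact Submodule.IsPrincipal.generator_mem _
  exact this

noncomputable def Qhat (n : ℕ) : W η n :=
  Polynomial.eval₂ C (X ⟨n, le_rfl⟩) (qg η n)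

theorem Ψ_Qhat (n : ℕ) :
    (Ψe η n).toRingEquiv.toRingHom (Qhat η n) = C (qg η n) := by
  unfold Qhat
  rw [Polynomial.hom_eval₂]
  have h1 : (Ψe η n).toRingEquiv.toRingHom.comp (C : F η n →+* W η n) =
      (C : Polynomial (F η n) →+* _).comp (Polynomial.C) := by
    ext y
    simp [Ψe, optionEquivRight_C]
  have h2 : (Ψe η n).toRingEquiv.toRingHom (X ⟨n, le_rfl⟩) = C Polynomial.X := by
    have h1' : eOpt n ⟨n, le_rfl⟩ = none := by simp [eOpt]
    simp [Ψe, h1', optionEquivRight_X_none]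
  rw [h1, h2, ← Polynomial.hom_eval₂]
  rw [Polynomial.eval₂_C_X]

theorem ker_μh (n : ℕ) : RingHom.ker (μh η n) = Ideal.span {Qhat η n} := by
  have hker : RingHom.ker (MvPolynomial.map (δh η n) :
      MvPolynomial {i : ℕ // n + 1 ≤ i} (Polynomial (F η n)) →+* W η (n+1)) =
      Ideal.span {(C (qg η n) : MvPolynomial {i : ℕ // n + 1 ≤ i} (Polynomial (F η n)))} := by
    rw [MvPolynomial.ker_map, ker_δh, Ideal.map_span, Set.image_singleton]
  ext x
  simp only [RingHom.mem_ker, μh, RingHom.comp_apply]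
  rw [show ((MvPolynomial.map (δh η n)) ((Ψe η n).toRingEquiv.toRingHom x) = 0) ↔
      ((Ψe η n).toRingEquiv.toRingHom x ∈ RingHom.ker (MvPolynomial.map (δh η n))) from Iff.rfl,
    hker, Ideal.mem_span_singleton, Ideal.mem_span_singleton]
  constructor
  · rintro ⟨z, hz⟩
    refine ⟨(Ψe η n).toRingEquiv.symm z, ?_⟩
    apply (Ψe η n).toRingEquiv.injective
    rw [map_mul]
    rw [show ((Ψe η n).toRingEquiv (Qhat η n)) = C (qg η n) from Ψ_Qhat η n]
    rw [(Ψe η n).toRingEquiv.apply_symm_apply z]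
    exact hz
  · rintro ⟨z, rfl⟩
    refine ⟨(Ψe η n).toRingEquiv z, ?_⟩
    rw [map_mul, Ψ_Qhat]
    rfl

theorem μh_Qhat (n : ℕ) : μh η n (Qhat η n) = 0 := by
  have : Qhat η n ∈ RingHom.ker (μh η n) := by
    rw [ker_μh]
    exact Ideal.subset_span rfl
  exact this


-- chunk 4: fractions and denominator clearing

noncomputable def Fr (n : ℕ) : Subfield A₀ where
  carrier := {y | ∃ u v : MvPolynomial ℕ Zh, u ∈ Rn (Zh := Zh) n ∧ v ∈ Rn (Zh := Zh) n ∧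
    η v ≠ 0 ∧ η v * y = η u}
  zero_mem' := ⟨0, 1, zero_mem _, one_mem _, by simp, by simp⟩
  one_mem' := ⟨1, 1, one_mem _, one_mem _, by simp, by simp⟩
  add_mem' := by
    rintro x y ⟨u1, v1, hu1, hv1, hv1n, h1⟩ ⟨u2, v2, hu2, hv2, hv2n, h2⟩
    refine ⟨u1 * v2 + u2 * v1, v1 * v2, add_mem (mul_mem hu1 hv2) (mul_mem hu2 hv1),
      mul_mem hv1 hv2, by simp [mul_ne_zero hv1n hv2n], ?_⟩
    simp only [map_add, map_mul]
    linear_combination η v2 * h1 + η v1 * h2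
  mul_mem' := by
    rintro x y ⟨u1, v1, hu1, hv1, hv1n, h1⟩ ⟨u2, v2, hu2, hv2, hv2n, h2⟩
    refine ⟨u1 * u2, v1 * v2, mul_mem hu1 hu2, mul_mem hv1 hv2,
      by simp [mul_ne_zero hv1n hv2n], ?_⟩
    simp only [map_mul]
    linear_combination (η v2 * y) * h1 + η u1 * h2
  neg_mem' := by
    rintro x ⟨u, v, hu, hv, hvn, h⟩
    exact ⟨-u, v, neg_mem hu, hv, hvn, by rw [map_neg, ← h]; ring⟩
  inv_mem' := by
    rintro x ⟨u, v, hu, hv, hvn, h⟩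
    by_cases hx : x = 0
    · exact ⟨0, 1, zero_mem _, one_mem _, by simp, by simp [hx]⟩
    · have hun : η u ≠ 0 := by
        rw [← h]
        exact mul_ne_zero hvn hx
      refine ⟨v, u, hv, hu, hun, ?_⟩
      field_simp
      linear_combination -h

theorem frac {n : ℕ} {y : A₀} (hy : y ∈ F η n) :
    ∃ u v : MvPolynomial ℕ Zh, u ∈ Rn (Zh := Zh) n ∧ v ∈ Rn (Zh := Zh) n ∧
      η v ≠ 0 ∧ η v * y = η u := by
  have hle : F η n ≤ Fr η n := by
    rw [F, Subfield.closure_le]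
    rintro w (⟨z, rfl⟩ | ⟨i, hi, rfl⟩)
    · exact ⟨C z, 1, Subring.subset_closure (Or.inl ⟨z, rfl⟩), one_mem _, by simp,
        by simp [σh]⟩
    · exact ⟨X i, 1, Subring.subset_closure (Or.inr ⟨i, hi, rfl⟩), one_mem _, by simp,
        by simp [av]⟩
  exact hle hy

theorem denom (n : ℕ) (ω : W η n) :
    ∃ v g : MvPolynomial ℕ Zh, v ∈ Rn (Zh := Zh) n ∧ η v ≠ 0 ∧
      Θ η n g = Θ η n v * ω := by
  induction ω using MvPolynomial.induction_on with
  | C y =>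
    obtain ⟨u, v, hu, hv, hvn, h⟩ := frac η y.2
    obtain ⟨wu, hwu, hΘu⟩ := Θ_const η hu
    obtain ⟨wv, hwv, hΘv⟩ := Θ_const η hv
    refine ⟨v, u, hv, hvn, ?_⟩
    rw [hΘu, hΘv, ← map_mul]
    congr 1
    ext
    push_cast [hwu, hwv]
    exact h.symm
  | add p q ihp ihq =>
    obtain ⟨v1, g1, hv1, hv1n, h1⟩ := ihp
    obtain ⟨v2, g2, hv2, hv2n, h2⟩ := ihq
    refine ⟨v1 * v2, v2 * g1 + v1 * g2, mul_mem hv1 hv2, by simp [mul_ne_zero hv1n hv2n], ?_⟩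
    simp only [map_add, map_mul, h1, h2]
    ring
  | mul_X p j ihp =>
    obtain ⟨v, g, hv, hvn, h⟩ := ihp
    refine ⟨v, g * X j.1, hv, hvn, ?_⟩
    rw [map_mul, h, Θ_X_ge η j.2]
    ring


-- chunk 5: the tower of kernels and the generators

theorem ker_Θ0 : RingHom.ker (Θ η 0) = Ideal.map (C : Zh →+* MvPolynomial ℕ Zh)
    (RingHom.ker (σh η)) := by
  have hinj : Function.Injective (fun i : ℕ => (⟨i, Nat.zero_le i⟩ : {i : ℕ // 0 ≤ i})) :=
    fun i j h => congrArg Subtype.val h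
  have hcomp : Θ η 0 = (rename (fun i : ℕ => (⟨i, Nat.zero_le i⟩ : {i : ℕ // 0 ≤ i}))).toRingHom.comp
      (MvPolynomial.map (σr η 0)) := by
    apply ringHom_ext
    · intro z
      simp [Θ_C]
    · intro i
      simp [Θ_X_ge η (Nat.zero_le i)]
  have h1 : RingHom.ker (Θ η 0) = RingHom.ker (MvPolynomial.map (σr η 0)) := by
    ext f
    rw [hcomp]
    simp only [RingHom.mem_ker, RingHom.comp_apply]
    constructor
    · intro h
      apply rename_injective _ hinj
      simpa using h
    · intro h
      rw [h]
      simp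
  rw [h1, MvPolynomial.ker_map]
  congr 1
  ext z
  simp only [RingHom.mem_ker]
  rw [show ((σr η 0) z = 0) ↔ (((σr η 0) z : A₀) = 0) by
    exact ⟨fun h => by rw [h]; rfl, fun h => Subtype.ext h⟩]
  rfl

theorem exists_c : ∃ c : Zh, RingHom.ker (σh η) = Ideal.span {c} := by
  obtain ⟨k, hk⟩ := (IsPrincipalIdealRing.principal
    ((RingHom.ker (σh η)).comap (algebraMap ℤ Zh))).principal
  refine ⟨algebraMap ℤ Zh k, ?_⟩
  have hmc := IsLocalization.map_comap (Submonoid.powers (2 : ℤ)) Zh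
    (RingHom.ker (σh η))
  rw [← hmc]
  rw [show (Ideal.under ℤ (RingHom.ker (σh η))) = Ideal.span {k} from hk]
  rw [Ideal.map_span, Set.image_singleton]

noncomputable def cg : Zh := (exists_c η).choose

theorem ker_σh : RingHom.ker (σh η) = Ideal.span {cg η} := (exists_c η).choose_spec

noncomputable def genv (n : ℕ) : MvPolynomial ℕ Zh := (denom η n (Qhat η n)).choose

noncomputable def gen : ℕ → MvPolynomial ℕ Zh
  | 0 => C (cg η)
  | (n+1) => (denom η n (Qhat η n)).choose_spec.choose

theorem gen_spec (n : ℕ) : genv η n ∈ Rn (Zh := Zh) n ∧ η (genv η n) ≠ 0 ∧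
    Θ η n (gen η (n+1)) = Θ η n (genv η n) * Qhat η n :=
  (denom η n (Qhat η n)).choose_spec.choose_spec

/-- the tower of kernels -/
noncomputable def Jid : ℕ → Ideal (MvPolynomial ℕ Zh)
  | 0 => ⊥
  | (n+1) => RingHom.ker (Θ η n)

theorem Jid_le_p : ∀ m, Jid η m ≤ RingHom.ker η
  | 0 => bot_le
  | (n+1) => kerΘ_le η n

theorem Jid_mono (m : ℕ) : Jid η m ≤ Jid η (m+1) := by
  cases m with
  | zero => exact bot_le
  | succ n =>
    intro f hf
    have : Θ η n f = 0 := hf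
    show f ∈ RingHom.ker (Θ η (n+1))
    rw [RingHom.mem_ker, Θ_succ, RingHom.comp_apply, this, map_zero]

theorem Jid_prime (m : ℕ) : (Jid η m).IsPrime := by
  haveI : IsDomain Zh := zhDomain
  cases m with
  | zero => exact Ideal.bot_prime
  | succ n => exact RingHom.ker_isPrime (Θ η n)

theorem gen_mem (m : ℕ) : gen η m ∈ Jid η (m+1) := by
  cases m with
  | zero =>
    show C (cg η) ∈ RingHom.ker (Θ η 0)
    rw [ker_Θ0]
    exact Ideal.mem_map_of_mem _ (by rw [ker_σh]; exact Ideal.subset_span rfl)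
  | succ n =>
    show gen η (n+1) ∈ RingHom.ker (Θ η (n+1))
    rw [RingHom.mem_ker, Θ_succ, RingHom.comp_apply, (gen_spec η n).2.2, map_mul, μh_Qhat,
      mul_zero]

theorem step_sub {n : ℕ} {f : MvPolynomial ℕ Zh} (hf : f ∈ RingHom.ker (Θ η (n+1))) :
    ∃ s h : MvPolynomial ℕ Zh, η s ≠ 0 ∧
      s * f - gen η (n+1) * h ∈ RingHom.ker (Θ η n) := by
  have hμ : μh η n (Θ η n f) = 0 := by
    rw [← RingHom.comp_apply, ← Θ_succ]
    exact hf
  have hmem : Θ η n f ∈ Ideal.span {Qhat η n} := by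
    rw [← ker_μh]
    exact hμ
  obtain ⟨H, hH⟩ := Ideal.mem_span_singleton.mp hmem
  obtain ⟨v, g, hv, hvn, hg⟩ := denom η n H
  obtain ⟨hv0, hv0n, hgen⟩ := gen_spec η n
  refine ⟨genv η n * v, g, by simp [mul_ne_zero hv0n hvn], ?_⟩
  rw [RingHom.mem_ker]
  simp only [map_sub, map_mul]
  rw [hg, hgen, hH]
  ring


-- chunk 6: union of the tower is the kernel

theorem mem_Rn_of_vars {f : MvPolynomial ℕ Zh} {n : ℕ} (h : ∀ i ∈ f.vars, i < n) :
    f ∈ Rn (Zh := Zh) n := by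
  have h1 : f ∈ MvPolynomial.supported Zh (Set.Iio n) :=
    MvPolynomial.mem_supported.2 (fun i hi => h i (by simpa using hi))
  have h2 : MvPolynomial.supported Zh (Set.Iio n) ≤
      ({ toSubsemiring := (Rn (Zh := Zh) n).toSubsemiring,
         algebraMap_mem' := fun z => by
           rw [MvPolynomial.algebraMap_eq]
           exact Subring.subset_closure (Or.inl ⟨z, rfl⟩) } : Subalgebra Zh (MvPolynomial ℕ Zh)) := by
    rw [MvPolynomial.supported_eq_adjoin_X]
    apply Algebra.adjoin_le
    rintro _ ⟨i, hi, rfl⟩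
    exact Subring.subset_closure (Or.inr ⟨i, hi, rfl⟩)
  exact h2 h1

theorem p_eq_iSup : RingHom.ker η = ⨆ m, Jid η m := by
  apply le_antisymm
  · intro f hf
    set n := f.vars.sup id + 1 with hn
    have hv : ∀ i ∈ f.vars, i < n := fun i hi =>
      Nat.lt_succ_of_le (Finset.le_sup (f := id) hi)
    obtain ⟨w, hw, hθ⟩ := Θ_const η (mem_Rn_of_vars hv)
    have h0 : Θ η n f = 0 := by
      rw [hθ]
      have : w = 0 := Subtype.ext (by rw [hw]; exact hf)
      rw [this, map_zero]
    exact Submodule.mem_iSup_of_mem (n+1) h0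
  · exact iSup_le (Jid_le_p η)


-- chunk 7: localization

noncomputable def pS : Submonoid (MvPolynomial ℕ Zh) :=
  haveI : (RingHom.ker η).IsPrime := RingHom.ker_isPrime η
  (RingHom.ker η).primeCompl

theorem mem_pS {r : MvPolynomial ℕ Zh} : r ∈ pS η ↔ η r ≠ 0 := Iff.rfl

theorem pS_le_nzd : pS η ≤ nonZeroDivisors (MvPolynomial ℕ Zh) := by
  haveI : IsDomain Zh := zhDomain
  intro s hs
  exact mem_nonZeroDivisors_of_ne_zero (fun h0 => (mem_pS η).1 hs (by rw [h0, map_zero]))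

theorem lcDomain : IsDomain (Localization (pS η)) := by
  haveI : IsDomain Zh := zhDomain
  exact IsLocalization.isDomain_localization (pS_le_nzd η)

noncomputable def ηL : Localization (pS η) →+* A₀ :=
  IsLocalization.lift (M := pS η) (fun s => isUnit_iff_ne_zero.2 ((mem_pS η).1 s.2))

theorem ηL_comp (r : MvPolynomial ℕ Zh) :
    ηL η (algebraMap (MvPolynomial ℕ Zh) (Localization (pS η)) r) = η r :=
  IsLocalization.lift_eq _ r

theorem ker_ηL : RingHom.ker (ηL η) =
    Ideal.map (algebraMap (MvPolynomial ℕ Zh) (Localization (pS η))) (RingHom.ker η) := by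
  apply le_antisymm
  · intro x hx
    obtain ⟨⟨r, s⟩, hrs⟩ := IsLocalization.mk'_surjective (pS η) x
    have h1 : ηL η x = η r * ↑(isUnit_iff_ne_zero.2 ((mem_pS η).1 s.2) : IsUnit (η s)).unit⁻¹ := by
      rw [← hrs]
      exact IsLocalization.lift_mk' _ _ _
    rw [RingHom.mem_ker] at hx
    have hr : η r = 0 := by
      have h2 : η r * ↑(isUnit_iff_ne_zero.2 ((mem_pS η).1 s.2) : IsUnit (η ↑s)).unit⁻¹ = 0 :=
        h1.symm.trans hx
      exact (Units.mul_left_eq_zero _).1 h2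
    have : x = algebraMap _ _ r * IsLocalization.mk' (Localization (pS η)) 1 s := by
      rw [← hrs]; exact IsLocalization.mk'_eq_mul_mk'_one _ _
    rw [this]
    exact Ideal.mul_mem_right _ _ (Ideal.mem_map_of_mem _ hr)
  · rw [Ideal.map_le_iff_le_comap]
    intro r hr
    rw [Ideal.mem_comap, RingHom.mem_ker, ηL_comp]
    exact hr

noncomputable def Jl (m : ℕ) : Ideal (Localization (pS η)) :=
  Ideal.map (algebraMap (MvPolynomial ℕ Zh) (Localization (pS η))) (Jid η m)

theorem Jl_succ (m : ℕ) : Jl η (m+1) = Jl η m ⊔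
    Ideal.span {algebraMap (MvPolynomial ℕ Zh) (Localization (pS η)) (gen η m)} := by
  cases m with
  | zero =>
    have h1 : Jid η 1 = Ideal.span {C (cg η)} := by
      show RingHom.ker (Θ η 0) = _
      rw [ker_Θ0, ker_σh, Ideal.map_span, Set.image_singleton]
    rw [Jl, h1, Ideal.map_span, Set.image_singleton]
    rw [show Jl η 0 = ⊥ from Ideal.map_bot]
    rw [bot_sup_eq]
    rfl
  | succ n =>
    apply le_antisymm
    · rw [Jl, Ideal.map_le_iff_le_comap]
      intro f hf
      rw [Ideal.mem_comap]
      obtain ⟨s, h, hsn, hker⟩ := step_sub η hf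
      set ι := algebraMap (MvPolynomial ℕ Zh) (Localization (pS η)) with hι
      have hmem : ι (s * f) ∈ Jl η (n+1) ⊔ Ideal.span {ι (gen η (n+1))} := by
        have e : ι (s * f) = ι (gen η (n+1)) * ι h + ι (s * f - gen η (n+1) * h) := by
          simp only [map_sub, map_mul]
          ring
        rw [e]
        exact add_mem
          (Ideal.mem_sup_right (Ideal.mul_mem_right _ _ (Ideal.subset_span rfl)))
          (Ideal.mem_sup_left (Ideal.mem_map_of_mem _ hker))
      obtain ⟨u, hu⟩ := IsLocalization.map_units (Localization (pS η))
        (⟨s, (mem_pS η).2 hsn⟩ : pS η)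
      have : ι f = ↑u⁻¹ * ι (s * f) := by
        rw [map_mul, ← hu]
        rw [← mul_assoc]
        rw [show (↑u⁻¹ * ↑u : Localization (pS η)) = 1 from u.inv_mul]
        rw [one_mul]
      rw [this]
      exact Submodule.smul_mem _ _ hmem
    · apply sup_le
      · exact Ideal.map_mono (Jid_mono η (n+1))
      · rw [Ideal.span_le, Set.singleton_subset_iff]
        exact Ideal.mem_map_of_mem _ (gen_mem η (n+1))

/-- which generators are non-trivial -/
def Pg (m : ℕ) : Prop := gen η m ∉ Jid η m

theorem Jl_eq_span (m : ℕ) : Jl η m = Ideal.span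
    ((algebraMap (MvPolynomial ℕ Zh) (Localization (pS η)) ∘ gen η) '' {j | j < m ∧ Pg η j}) := by
  induction m with
  | zero =>
    have : {j | j < 0 ∧ Pg η j} = ∅ := by ext j; simp
    rw [this, Set.image_empty, Ideal.span_empty]
    exact Ideal.map_bot
  | succ m ih =>
    rw [Jl_succ, ih]
    by_cases hP : Pg η m
    · have hset : {j | j < m + 1 ∧ Pg η j} = insert m {j | j < m ∧ Pg η j} := by
        ext j
        simp only [Set.mem_setOf_eq, Set.mem_insert_iff]
        constructor
        · rintro ⟨hj, hp⟩
          rcases Nat.lt_succ_iff_lt_or_eq.1 hj with h | h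
          · exact Or.inr ⟨h, hp⟩
          · exact Or.inl h
        · rintro (rfl | ⟨hj, hp⟩)
          · exact ⟨Nat.lt_succ_self _, hP⟩
          · exact ⟨hj.trans (Nat.lt_succ_self _), hp⟩
      rw [hset, Set.image_insert_eq, Ideal.span_insert, sup_comm]
      rfl
    · have hset : {j | j < m + 1 ∧ Pg η j} = {j | j < m ∧ Pg η j} := by
        ext j
        simp only [Set.mem_setOf_eq]
        constructor
        · rintro ⟨hj, hp⟩
          rcases Nat.lt_succ_iff_lt_or_eq.1 hj with h | rfl
          · exact ⟨h, hp⟩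
          · exact absurd hp hP
        · rintro ⟨hj, hp⟩
          exact ⟨hj.trans (Nat.lt_succ_self _), hp⟩
      rw [hset]
      have : Ideal.span {algebraMap (MvPolynomial ℕ Zh) (Localization (pS η)) (gen η m)} ≤
          Jl η m := by
        rw [Ideal.span_le, Set.singleton_subset_iff]
        exact Ideal.mem_map_of_mem _ (not_not.1 hP)
      rw [ih] at this
      exact sup_eq_left.2 this

theorem span_all : Ideal.span
    ((algebraMap (MvPolynomial ℕ Zh) (Localization (pS η)) ∘ gen η) '' {j | Pg η j}) =
    RingHom.ker (ηL η) := by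
  rw [ker_ηL, p_eq_iSup, Ideal.map_iSup]
  apply le_antisymm
  · rw [Ideal.span_le]
    rintro _ ⟨j, hj, rfl⟩
    apply Submodule.mem_iSup_of_mem (j+1)
    show _ ∈ Jl η (j+1)
    rw [Jl_eq_span]
    exact Ideal.subset_span ⟨j, ⟨Nat.lt_succ_self _, hj⟩, rfl⟩
  · apply iSup_le
    intro m
    show Jl η m ≤ _
    rw [Jl_eq_span]
    apply Ideal.span_mono
    apply Set.image_mono
    intro j hj
    exact hj.2


-- chunk 8: the subfield K and the quotient isomorphism

noncomputable def Kf : Subfield A₀ where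
  toSubring := (ηL η).range
  inv_mem' := by
    intro x hx
    obtain ⟨y, rfl⟩ := RingHom.mem_range.1 hx
    by_cases h : ηL η y = 0
    · rw [h, inv_zero]
      exact ⟨0, map_zero _⟩
    · obtain ⟨⟨r, s⟩, hrs⟩ := IsLocalization.mk'_surjective (pS η) y
      have h1 : ηL η y = η r * ↑(isUnit_iff_ne_zero.2 ((mem_pS η).1 s.2) : IsUnit (η ↑s)).unit⁻¹ := by
        rw [← hrs]
        exact IsLocalization.lift_mk' _ _ _
      have hr : η r ≠ 0 := by
        intro h0
        apply h
        rw [h1, h0, zero_mul]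
      set z := IsLocalization.mk' (Localization (pS η)) (s : MvPolynomial ℕ Zh)
        (⟨r, (mem_pS η).2 hr⟩ : pS η) with hz
      have hmul : ηL η y * ηL η z = 1 := by
        rw [← map_mul, ← hrs, hz, ← IsLocalization.mk'_mul]
        rw [show (r * ↑s : MvPolynomial ℕ Zh) =
          ↑(s * (⟨r, (mem_pS η).2 hr⟩ : pS η)) by
            simp [mul_comm]]
        rw [IsLocalization.mk'_self']
        exact map_one _
      exact ⟨z, (inv_eq_of_mul_eq_one_right hmul).symm⟩

theorem mem_Kf {x : A₀} : x ∈ Kf η ↔ x ∈ (ηL η).range := Iff.rfl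

theorem range_sub_Kf : Set.range η ⊆ (Kf η : Set A₀) := by
  rintro _ ⟨r, rfl⟩
  exact ⟨algebraMap _ _ r, ηL_comp η r⟩

noncomputable def quotEquiv : (Localization (pS η) ⧸ RingHom.ker (ηL η)) ≃+* Kf η :=
  (RingHom.quotientKerEquivRange (ηL η)).trans
    { toFun := fun x => ⟨x.1, x.2⟩
      invFun := fun x => ⟨x.1, x.2⟩
      left_inv := fun x => rfl
      right_inv := fun x => rfl
      map_mul' := fun x y => rfl
      map_add' := fun x y => rfl }

-- chunk 9: primality and regularity

theorem disj (m : ℕ) : Disjoint ((pS η : Submonoid (MvPolynomial ℕ Zh)) : Set (MvPolynomial ℕ Zh))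
    ((Jid η m : Ideal (MvPolynomial ℕ Zh)) : Set (MvPolynomial ℕ Zh)) :=
  Set.disjoint_left.2 fun s hs hJ => (mem_pS η).1 hs (Jid_le_p η m hJ)

theorem Jl_prime (m : ℕ) : (Jl η m).IsPrime := by
  haveI : IsDomain Zh := zhDomain
  exact IsLocalization.isPrime_of_isPrime_disjoint (pS η) _ (Jid η m) (Jid_prime η m) (disj η m)

theorem not_mem_Jl {m : ℕ} (h : gen η m ∉ Jid η m) :
    algebraMap (MvPolynomial ℕ Zh) (Localization (pS η)) (gen η m) ∉ Jl η m := by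
  haveI : IsDomain Zh := zhDomain
  intro hmem
  apply h
  have hcomap := IsLocalization.comap_map_of_isPrime_disjoint (pS η) (Localization (pS η))
    (Jid_prime η m) (disj η m)
  rw [show Jid η m = Ideal.comap (algebraMap (MvPolynomial ℕ Zh) (Localization (pS η)))
    (Jl η m) from hcomap.symm]
  exact hmem

theorem mk_mem_nzd {I : Ideal (Localization (pS η))} (hI : I.IsPrime)
    {x : Localization (pS η)} (hx : x ∉ I) :
    Ideal.Quotient.mk I x ∈ nonZeroDivisors (Localization (pS η) ⧸ I) := by
  haveI := hI
  haveI : IsDomain (Localization (pS η) ⧸ I) := Ideal.Quotient.isDomain I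
  exact mem_nonZeroDivisors_of_ne_zero (fun h0 => hx (Ideal.Quotient.eq_zero_iff_mem.1 h0))

noncomputable def Gl (k : ℕ) : Localization (pS η) :=
  algebraMap (MvPolynomial ℕ Zh) (Localization (pS η)) (gen η (Nat.nth (Pg η) k))

theorem seg (k : ℕ) (hk : ∀ hf : (setOf (Pg η)).Finite, k < hf.toFinset.card) :
    {j | j < Nat.nth (Pg η) k ∧ Pg η j} = Nat.nth (Pg η) '' Set.Iio k := by
  classical
  ext j
  simp only [Set.mem_setOf_eq, Set.mem_image, Set.mem_Iio]
  constructor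
  · rintro ⟨hlt, hp⟩
    refine ⟨Nat.count (Pg η) j, ?_, Nat.nth_count hp⟩
    have h1 : Nat.count (Pg η) j ≤ k := by
      have := Nat.count_monotone (Pg η) (le_of_lt hlt)
      rwa [Nat.count_nth hk] at this
    rcases lt_or_eq_of_le h1 with h | h
    · exact h
    · exfalso
      have := Nat.nth_count hp
      rw [h] at this
      omega
  · rintro ⟨i, hik, rfl⟩
    refine ⟨Nat.nth_lt_nth' hik hk, Nat.nth_mem i (fun hf => (hik.trans (hk hf)))⟩

theorem span_Gl (k : ℕ) (hk : ∀ hf : (setOf (Pg η)).Finite, k < hf.toFinset.card) :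
    Ideal.span (Gl η '' Set.Iio k) = Jl η (Nat.nth (Pg η) k) := by
  rw [Jl_eq_span, seg η k hk]
  congr 1
  rw [← Set.image_comp]
  rfl

theorem Gl_reg (k : ℕ) (hk : ∀ hf : (setOf (Pg η)).Finite, k < hf.toFinset.card) :
    Ideal.Quotient.mk (Ideal.span (Gl η '' Set.Iio k)) (Gl η k) ∈
      nonZeroDivisors (Localization (pS η) ⧸ Ideal.span (Gl η '' Set.Iio k)) := by
  rw [span_Gl η k hk]
  exact mk_mem_nzd η (Jl_prime η _) (not_mem_Jl η (Nat.nth_mem k hk))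


-- chunk 10: ordinal packaging

noncomputable def xseq : Ordinal → Localization (pS η) :=
  fun α => @dite _ (∃ n : ℕ, α = ↑n) (Classical.propDecidable _)
    (fun h => Gl η h.choose) (fun _ => 0)

theorem xseq_nat (k : ℕ) : xseq η (k : Ordinal) = Gl η k := by
  have h : ∃ n : ℕ, (k : Ordinal) = ↑n := ⟨k, rfl⟩
  rw [xseq, dif_pos h]
  congr 1
  exact (Nat.cast_inj.1 h.choose_spec).symm

theorem xseq_image_nat (k : ℕ) :
    xseq η '' {β | β < (k : Ordinal)} = Gl η '' Set.Iio k := by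
  ext y
  simp only [Set.mem_image, Set.mem_setOf_eq, Set.mem_Iio]
  constructor
  · rintro ⟨β, hβ, rfl⟩
    obtain ⟨m, rfl⟩ := Ordinal.lt_omega0.1 (hβ.trans (Ordinal.nat_lt_omega0 k))
    exact ⟨m, Nat.cast_lt.1 hβ, (xseq_nat η m).symm⟩
  · rintro ⟨m, hm, rfl⟩
    exact ⟨(m : Ordinal), Nat.cast_lt.2 hm, xseq_nat η m⟩

theorem xseq_image_omega :
    xseq η '' {β | β < Ordinal.omega0} = Set.range (Gl η) := by
  ext y
  simp only [Set.mem_image, Set.mem_setOf_eq, Set.mem_range]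
  constructor
  · rintro ⟨β, hβ, rfl⟩
    obtain ⟨m, rfl⟩ := Ordinal.lt_omega0.1 hβ
    exact ⟨m, (xseq_nat η m).symm⟩
  · rintro ⟨m, rfl⟩
    exact ⟨(m : Ordinal), Ordinal.nat_lt_omega0 m, xseq_nat η m⟩

theorem reg_fin (hfin : (setOf (Pg η)).Finite) :
    IsRegularOrdSeq (hfin.toFinset.card : Ordinal) (xseq η) := by
  intro α hα
  obtain ⟨k, rfl⟩ := Ordinal.lt_omega0.1 (hα.trans (Ordinal.nat_lt_omega0 _))
  have hk : k < hfin.toFinset.card := Nat.cast_lt.1 hα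
  rw [xseq_nat]
  have key : ∀ s t : Set (Localization (pS η)), s = t →
      Ideal.Quotient.mk (Ideal.span t) (Gl η k) ∈ nonZeroDivisors (Localization (pS η) ⧸ Ideal.span t) →
      Ideal.Quotient.mk (Ideal.span s) (Gl η k) ∈ nonZeroDivisors (Localization (pS η) ⧸ Ideal.span s) := by
    rintro s t rfl h; exact h
  exact key _ _ (xseq_image_nat η k) (Gl_reg η k (fun hf => hk))

theorem reg_inf (hinf : ¬ (setOf (Pg η)).Finite) :
    IsRegularOrdSeq Ordinal.omega0 (xseq η) := by
  intro α hα
  obtain ⟨k, rfl⟩ := Ordinal.lt_omega0.1 hα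
  rw [xseq_nat]
  have key : ∀ s t : Set (Localization (pS η)), s = t →
      Ideal.Quotient.mk (Ideal.span t) (Gl η k) ∈ nonZeroDivisors (Localization (pS η) ⧸ Ideal.span t) →
      Ideal.Quotient.mk (Ideal.span s) (Gl η k) ∈ nonZeroDivisors (Localization (pS η) ⧸ Ideal.span s) := by
    rintro s t rfl h; exact h
  exact key _ _ (xseq_image_nat η k) (Gl_reg η k (fun hf => absurd hf hinf))

theorem span_fin (hfin : (setOf (Pg η)).Finite) :
    Ideal.span (xseq η '' {α | α < (hfin.toFinset.card : Ordinal)}) =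
      RingHom.ker (ηL η) := by
  classical
  have hset : Nat.nth (Pg η) '' Set.Iio hfin.toFinset.card = {j | Pg η j} := by
    ext j
    simp only [Set.mem_image, Set.mem_Iio, Set.mem_setOf_eq]
    constructor
    · rintro ⟨i, hi, rfl⟩
      exact Nat.nth_mem_of_lt_card hfin hi
    · intro hj
      exact ⟨Nat.count (Pg η) j, Nat.count_lt_card hfin hj, Nat.nth_count hj⟩
  rw [xseq_image_nat, ← span_all]
  rw [show Gl η '' Set.Iio hfin.toFinset.card =
    ((algebraMap (MvPolynomial ℕ Zh) (Localization (pS η))) ∘ gen η) ''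
      (Nat.nth (Pg η) '' Set.Iio hfin.toFinset.card) by
      rw [← Set.image_comp]; rfl]
  rw [hset]

theorem span_inf (hinf : ¬ (setOf (Pg η)).Finite) :
    Ideal.span (xseq η '' {α | α < Ordinal.omega0}) = RingHom.ker (ηL η) := by
  rw [xseq_image_omega, ← span_all]
  rw [show Set.range (Gl η) =
    ((algebraMap (MvPolynomial ℕ Zh) (Localization (pS η))) ∘ gen η) ''
      (Set.range (Nat.nth (Pg η))) by
      rw [← Set.range_comp]; rfl]
  rw [Nat.range_nth_of_infinite hinf]

end Eta
end FFLRQ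

/-- Let `R₀` be a polynomial ring in countably many variables over `ℤ[1/2]` (with `Zh` any
model of `ℤ[1/2]`), and `η : R₀ → A₀` a ring map into a field of characteristic `≠ 2`.
Then there is a multiplicative set `S ⊆ R₀` and a regular sequence in `S⁻¹R₀` whose
quotient is isomorphic to a subfield `K` of `A₀` containing the image of `η`, and `A₀` is
a free `K`-module.  In particular `A₀` is free over a localised regular quotient of `R₀`. -/
theorem field_is_free_over_LRQ
    (Zh : Type) [CommRing Zh] [Algebra ℤ Zh] [IsLocalization.Away (2 : ℤ) Zh]
    (A₀ : Type) [Field A₀] (hchar : ringChar A₀ ≠ 2)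
    (η : MvPolynomial ℕ Zh →+* A₀) :
    ∃ (S : Submonoid (MvPolynomial ℕ Zh)) (lam : Ordinal) (x : Ordinal → Localization S),
      IsRegularOrdSeq lam x ∧
      ∃ K : Subfield A₀, Set.range η ⊆ (K : Set A₀) ∧
        Nonempty ((Localization S ⧸ Ideal.span (x '' {α | α < lam})) ≃+* K) ∧
        Module.Free K A₀ := by
  classical
  by_cases hfin : (setOf (FFLRQ.Pg η)).Finite
  · exact ⟨FFLRQ.pS η, (hfin.toFinset.card : Ordinal), FFLRQ.xseq η,
      FFLRQ.reg_fin η hfin,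
      FFLRQ.Kf η, FFLRQ.range_sub_Kf η,
      ⟨(Ideal.quotEquivOfEq (FFLRQ.span_fin η hfin)).trans (FFLRQ.quotEquiv η)⟩,
      Module.Free.of_divisionRing _ _⟩
  · exact ⟨FFLRQ.pS η, Ordinal.omega0, FFLRQ.xseq η,
      FFLRQ.reg_inf η hfin,
      FFLRQ.Kf η, FFLRQ.range_sub_Kf η,
      ⟨(Ideal.quotEquivOfEq (FFLRQ.span_inf η hfin)).trans (FFLRQ.quotEquiv η)⟩,
      Module.Free.of_divisionRing _ _⟩
end

section
/- Let R₀ be a commutative ring, T a multiplicative subset of an R₀-algebra A, and suppose B = (S⁻¹R₀)/I is a localised regular quotient of R₀. If A₀ is a localization of B at a multiplicative set, then A₀ is a localised regular quotient of R₀. -/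
/-- The quotient of a localization is the localization of the quotient. -/
lemma LRQ.isLocalization_quotient {A A' : Type*} [CommRing A] [CommRing A'] [Algebra A A']
    (M : Submonoid A) [IsLocalization M A'] (J : Ideal A) :
    letI : Algebra (A ⧸ J) (A' ⧸ J.map (algebraMap A A')) :=
      (Ideal.quotientMap (J.map (algebraMap A A')) (algebraMap A A') Ideal.le_comap_map).toAlgebra
    IsLocalization (M.map (Ideal.Quotient.mk J)) (A' ⧸ J.map (algebraMap A A')) := by
  letI : Algebra (A ⧸ J) (A' ⧸ J.map (algebraMap A A')) :=
    (Ideal.quotientMap (J.map (algebraMap A A')) (algebraMap A A') Ideal.le_comap_map).toAlgebra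
  have halg : (algebraMap (A ⧸ J) (A' ⧸ J.map (algebraMap A A'))) =
      Ideal.quotientMap (J.map (algebraMap A A')) (algebraMap A A') Ideal.le_comap_map := rfl
  refine ⟨⟨?_, ?_, ?_⟩⟩
  · rintro ⟨_, m, hm, rfl⟩
    show IsUnit (algebraMap (A ⧸ J) (A' ⧸ J.map (algebraMap A A')) (Ideal.Quotient.mk J m))
    rw [halg, Ideal.quotientMap_mk]
    exact (IsLocalization.map_units A' ⟨m, hm⟩).map (Ideal.Quotient.mk _)
  · intro z
    obtain ⟨z', rfl⟩ := Ideal.Quotient.mk_surjective z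
    obtain ⟨⟨a, m⟩, e⟩ := IsLocalization.surj M z'
    refine ⟨⟨Ideal.Quotient.mk J a, ⟨Ideal.Quotient.mk J (m : A), ⟨(m : A), m.2, rfl⟩⟩⟩, ?_⟩
    simp only [halg, Ideal.quotientMap_mk]
    rw [← map_mul]
    exact congrArg _ e
  · intro a b h
    obtain ⟨a, rfl⟩ := Ideal.Quotient.mk_surjective a
    obtain ⟨b, rfl⟩ := Ideal.Quotient.mk_surjective b
    rw [halg, Ideal.quotientMap_mk, Ideal.quotientMap_mk, Ideal.Quotient.eq, ← map_sub] at h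
    rw [IsLocalization.mem_map_algebraMap_iff M A'] at h
    obtain ⟨⟨j, m⟩, hj⟩ := h
    rw [← map_mul] at hj
    obtain ⟨c, hc⟩ := (IsLocalization.eq_iff_exists M A').mp hj
    refine ⟨⟨Ideal.Quotient.mk J ((c : A) * (m : A)), ⟨(c : A) * (m : A),
      mul_mem c.2 m.2, rfl⟩⟩, ?_⟩
    show Ideal.Quotient.mk J ((c : A) * (m : A)) * Ideal.Quotient.mk J a =
      Ideal.Quotient.mk J ((c : A) * (m : A)) * Ideal.Quotient.mk J b
    rw [← map_mul, ← map_mul, Ideal.Quotient.eq]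
    have hrw : (c : A) * (m : A) * a - (c : A) * (m : A) * b = (c : A) * ((a - b) * (m : A)) := by
      ring
    rw [hrw, hc]
    exact J.mul_mem_left _ j.2

/-- The image of a nonzerodivisor in a localization is a nonzerodivisor. -/
lemma LRQ.algebraMap_mem_nonZeroDivisors {A A' : Type*} [CommRing A] [CommRing A'] [Algebra A A']
    (M : Submonoid A) [IsLocalization M A'] {a : A} (ha : a ∈ nonZeroDivisors A) :
    algebraMap A A' a ∈ nonZeroDivisors A' := by
  rw [mem_nonZeroDivisors_iff_right]
  intro z hz
  obtain ⟨⟨b, m⟩, e⟩ := IsLocalization.surj M z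
  have hb : algebraMap A A' b * algebraMap A A' a = 0 := by
    rw [← e, mul_right_comm, hz, zero_mul]
  rw [← map_mul] at hb
  obtain ⟨c, hc⟩ := (IsLocalization.map_eq_zero_iff M A' _).mp hb
  have h1 : (c : A) * b = 0 :=
    mem_nonZeroDivisors_iff_right.mp ha _ (by rw [mul_assoc]; exact hc)
  have h2 : algebraMap A A' b = 0 := by
    have h3 := congrArg (algebraMap A A') h1
    rw [map_mul, map_zero] at h3
    exact (IsUnit.mul_right_eq_zero (IsLocalization.map_units A' c)).mp h3
  have h4 : z * algebraMap A A' (m : A) = 0 := by rw [e, h2]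
  exact (IsUnit.mul_left_eq_zero (IsLocalization.map_units A' m)).mp h4

/-- A localization at a monoid `V` squeezed between `T` and `T ⊔ units` is a localization
at `T`. -/
lemma LRQ.isLocalization_of_between {B C : Type*} [CommRing B] [CommRing C] [Algebra B C]
    (T V : Submonoid B) (h1 : V ≤ T ⊔ IsUnit.submonoid B)
    (h2 : ∀ t ∈ T, ∃ u : B, IsUnit u ∧ t * u ∈ V) [IsLocalization V C] :
    IsLocalization T C := by
  refine ⟨⟨?_, ?_, ?_⟩⟩
  · rintro ⟨t, ht⟩
    obtain ⟨u, hu, huv⟩ := h2 t ht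
    have h3 := IsLocalization.map_units C ⟨t * u, huv⟩
    rw [show ((⟨t * u, huv⟩ : V) : B) = t * u from rfl, map_mul] at h3
    exact (IsUnit.mul_iff.mp h3).1
  · intro z
    obtain ⟨⟨b, v⟩, e⟩ := IsLocalization.surj V z
    obtain ⟨t, ht, u, hu, huv⟩ := Submonoid.mem_sup.mp (h1 v.2)
    rw [IsUnit.mem_submonoid_iff] at hu
    obtain ⟨uu, rfl⟩ := hu
    refine ⟨⟨b * ↑uu⁻¹, ⟨t, ht⟩⟩, ?_⟩
    have hv : algebraMap B C (v : B) = algebraMap B C t * algebraMap B C (uu : B) := by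
      rw [← map_mul, huv]
    calc z * algebraMap B C t
        = z * algebraMap B C t * (algebraMap B C (uu : B) * algebraMap B C (↑uu⁻¹ : B)) := by
          rw [← map_mul, Units.mul_inv, map_one, mul_one]
      _ = (z * algebraMap B C (v : B)) * algebraMap B C (↑uu⁻¹ : B) := by rw [hv]; ring
      _ = algebraMap B C b * algebraMap B C (↑uu⁻¹ : B) := by rw [e]
      _ = algebraMap B C (b * ↑uu⁻¹) := (map_mul _ _ _).symm
  · intro a b h
    obtain ⟨v, hv⟩ := (IsLocalization.eq_iff_exists V C).mp h
    obtain ⟨t, ht, u, hu, huv⟩ := Submonoid.mem_sup.mp (h1 v.2)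
    rw [IsUnit.mem_submonoid_iff] at hu
    obtain ⟨uu, rfl⟩ := hu
    refine ⟨⟨t, ht⟩, ?_⟩
    have h4 : (uu : B) * (t * a) = (uu : B) * (t * b) := by
      calc (uu : B) * (t * a) = (t * (uu : B)) * a := by ring
        _ = (v : B) * a := by rw [huv]
        _ = (v : B) * b := hv
        _ = (t * (uu : B)) * b := by rw [huv]
        _ = (uu : B) * (t * b) := by ring
    exact (Units.mul_right_inj uu).mp h4

set_option synthInstance.maxHeartbeats 1000000 in
set_option maxHeartbeats 2000000 in
/-- A localization of a localised regular quotient is a localised regular quotient: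
if `B = (S⁻¹R₀)/(x_α : α < λ)` with `(x_α)` regular, and `A₀ = T⁻¹B`, then there exist a
multiplicative set `S' ⊆ R₀` and a regular sequence `(x'_α : α < λ)` in `S'⁻¹R₀` with
`A₀ ≅ (S'⁻¹R₀)/(x'_α)` as `R₀`-algebras. -/
theorem localization_of_lrq_is_lrq {R₀ : Type*} [CommRing R₀] (S : Submonoid R₀)
    (lam : Ordinal) (x : Ordinal → Localization S) (hx : IsRegularOrdSeq lam x)
    (T : Submonoid (Localization S ⧸ Ideal.span (x '' {α | α < lam}))) :
    ∃ (S' : Submonoid R₀) (x' : Ordinal → Localization S'),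
      IsRegularOrdSeq lam x' ∧
      ∃ e : Localization T ≃+* (Localization S' ⧸ Ideal.span (x' '' {α | α < lam})),
        e.toRingHom.comp ((algebraMap _ (Localization T)).comp
          ((Ideal.Quotient.mk (Ideal.span (x '' {α | α < lam}))).comp
            (algebraMap R₀ (Localization S)))) =
        (Ideal.Quotient.mk (Ideal.span (x' '' {α | α < lam}))).comp
          (algebraMap R₀ (Localization S')) := by
  classical
  let I : Ideal (Localization S) := Ideal.span (x '' {α | α < lam})
  let q : Localization S →+* (Localization S ⧸ I) := Ideal.Quotient.mk I
  let Tu : Submonoid (Localization S ⧸ I) := T ⊔ IsUnit.submonoid _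
  let S' : Submonoid R₀ :=
    Submonoid.comap ((q.comp (algebraMap R₀ (Localization S))).toMonoidHom) Tu
  have hSS' : S ≤ S' := by
    intro s hs
    show q (algebraMap R₀ (Localization S) s) ∈ Tu
    exact Submonoid.mem_sup_right
      ((IsUnit.mem_submonoid_iff _).mpr
        ((IsLocalization.map_units (Localization S) ⟨s, hs⟩).map q))
  letI : Algebra (Localization S) (Localization S') :=
    IsLocalization.localizationAlgebraOfSubmonoidLe _ _ S S' hSS'
  haveI : IsScalarTower R₀ (Localization S) (Localization S') :=
    IsLocalization.localization_isScalarTower_of_submonoid_le _ _ S S' hSS'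
  haveI hN' : IsLocalization (S'.map (algebraMap R₀ (Localization S))) (Localization S') :=
    IsLocalization.isLocalization_of_submonoid_le _ _ S S' hSS'
  let f : Localization S →+* Localization S' :=
    algebraMap (Localization S) (Localization S')
  let x' : Ordinal → Localization S' := fun α => f (x α)
  refine ⟨S', x', ?_, ?_⟩
  · -- regularity
    intro α hα
    have hspanα : Ideal.span (x' '' {β | β < α}) =
        (Ideal.span (x '' {β | β < α})).map f := by
      rw [Ideal.map_span, Set.image_image]
    suffices hK : ∀ K : Ideal (Localization S'), K = (Ideal.span (x '' {β | β < α})).map f →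
        Ideal.Quotient.mk K (x' α) ∈ nonZeroDivisors (Localization S' ⧸ K) from hK _ hspanα
    rintro K rfl
    let Jα : Ideal (Localization S) := Ideal.span (x '' {β | β < α})
    letI : Algebra (Localization S ⧸ Jα) (Localization S' ⧸ Jα.map f) :=
      (Ideal.quotientMap (Jα.map f) f Ideal.le_comap_map).toAlgebra
    haveI : IsLocalization
        ((S'.map (algebraMap R₀ (Localization S))).map (Ideal.Quotient.mk Jα))
        (Localization S' ⧸ Jα.map f) :=
      LRQ.isLocalization_quotient (S'.map (algebraMap R₀ (Localization S))) Jα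
    have hnzd := LRQ.algebraMap_mem_nonZeroDivisors
      ((S'.map (algebraMap R₀ (Localization S))).map (Ideal.Quotient.mk Jα))
      (A' := Localization S' ⧸ Jα.map f) (hx α hα)
    have heq : algebraMap (Localization S ⧸ Jα) (Localization S' ⧸ Jα.map f)
        (Ideal.Quotient.mk Jα (x α)) = Ideal.Quotient.mk (Jα.map f) (x' α) := by
      show Ideal.quotientMap (Jα.map f) f Ideal.le_comap_map (Ideal.Quotient.mk Jα (x α)) = _
      rw [Ideal.quotientMap_mk]
    rwa [heq] at hnzd
  · -- the isomorphism
    have hspan : Ideal.span (x' '' {α | α < lam}) = I.map f := by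
      show Ideal.span (x' '' {α | α < lam}) =
        Ideal.map f (Ideal.span (x '' {α | α < lam}))
      rw [Ideal.map_span, Set.image_image]
    rw [hspan]
    letI : Algebra (Localization S ⧸ I) (Localization S' ⧸ I.map f) :=
      (Ideal.quotientMap (I.map f) f Ideal.le_comap_map).toAlgebra
    let V : Submonoid (Localization S ⧸ I) :=
      (S'.map (algebraMap R₀ (Localization S))).map (Ideal.Quotient.mk I)
    haveI : IsLocalization V (Localization S' ⧸ I.map f) :=
      LRQ.isLocalization_quotient (S'.map (algebraMap R₀ (Localization S))) I
    have h1 : V ≤ Tu := by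
      rintro _ ⟨_, ⟨r, hr, rfl⟩, rfl⟩
      exact hr
    have h2 : ∀ t ∈ T, ∃ u, IsUnit u ∧ t * u ∈ V := by
      intro t ht
      obtain ⟨z, rfl⟩ := Ideal.Quotient.mk_surjective (I := I) t
      obtain ⟨⟨r, s⟩, rfl⟩ := IsLocalization.mk'_surjective S z
      refine ⟨q (algebraMap R₀ (Localization S) (s : R₀)),
        (IsLocalization.map_units (Localization S) s).map q, ?_⟩
      have key : q (IsLocalization.mk' (Localization S) r s) *
          q (algebraMap R₀ (Localization S) (s : R₀)) =
          q (algebraMap R₀ (Localization S) r) := by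
        rw [← map_mul, IsLocalization.mk'_spec]
      show q (IsLocalization.mk' (Localization S) r s) *
          q (algebraMap R₀ (Localization S) (s : R₀)) ∈ V
      rw [key]
      refine ⟨algebraMap R₀ (Localization S) r, ⟨r, ?_, rfl⟩, rfl⟩
      show q (algebraMap R₀ (Localization S) r) ∈ Tu
      rw [← key]
      exact mul_mem (Submonoid.mem_sup_left ht)
        (Submonoid.mem_sup_right ((IsUnit.mem_submonoid_iff _).mpr
          ((IsLocalization.map_units (Localization S) s).map q)))
    haveI : IsLocalization T (Localization S' ⧸ I.map f) :=
      LRQ.isLocalization_of_between T V h1 h2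
    let E := IsLocalization.algEquiv T (Localization T) (Localization S' ⧸ I.map f)
    refine ⟨E.toRingEquiv, ?_⟩
    ext r
    show E (algebraMap (Localization S ⧸ I) (Localization T)
      (q (algebraMap R₀ (Localization S) r))) =
      Ideal.Quotient.mk (I.map f) (algebraMap R₀ (Localization S') r)
    rw [AlgEquiv.commutes]
    show Ideal.quotientMap (I.map f) f Ideal.le_comap_map
      (Ideal.Quotient.mk I (algebraMap R₀ (Localization S) r)) = _
    rw [Ideal.quotientMap_mk, ← IsScalarTower.algebraMap_apply]
end
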